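/- The kernel of the natural map Q*/Q*⁴ → Q(i)*/Q(i)*⁴ (induced by the inclusion Q ⊂ Q(i)) is the cyclic subgroup of order 2 generated by the class of -4. -/

import Mathlib

open IntermediateField

private def Tsub : Subalgebra ℚ ℂ where
  carrier := {z | ∃ a b : ℚ, z = a + b * Complex.I}
  mul_mem' := by
    rintro z w ⟨a, b, rfl⟩ ⟨c, d, rfl⟩
    exact ⟨a * c - b * d, a * d + b * c, by
      push_cast
      linear_combination ((b : ℂ) * d) * Complex.I_sq⟩
  add_mem' := by
    rintro z w ⟨a, b, rfl⟩ ⟨c, d, rfl⟩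
    exact ⟨a + c, b + d, by push_cast; ring⟩
  one_mem' := ⟨1, 0, by push_cast; ring⟩
  zero_mem' := ⟨0, 0, by push_cast; ring⟩
  algebraMap_mem' := fun r => ⟨r, 0, by rw [eq_ratCast (algebraMap ℚ ℂ) r]; push_cast; ring⟩

private lemma I_integral : IsIntegral ℚ Complex.I :=
  ⟨Polynomial.X ^ 2 + 1, Polynomial.monic_X_pow_add_C 1 (by norm_num), by
    simp [Complex.I_sq]⟩

private lemma cast_split {p q x : ℚ} (h : (p : ℂ) + (q : ℂ) * Complex.I = (x : ℂ)) :
    p = x ∧ q = 0 := by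
  have hre := congrArg Complex.re h
  have him := congrArg Complex.im h
  simp only [Complex.add_re, Complex.add_im, Complex.mul_re, Complex.mul_im,
    Complex.ratCast_re, Complex.ratCast_im, Complex.I_re, Complex.I_im] at hre him
  constructor <;> [exact_mod_cast (by linarith : (p:ℝ) = x); exact_mod_cast (by linarith : (q:ℝ) = 0)]

private lemma mem_form {z : ℂ} (hz : z ∈ ℚ⟮Complex.I⟯) :
    ∃ a b : ℚ, z = a + b * Complex.I := by
  have hle : (ℚ⟮Complex.I⟯).toSubalgebra ≤ Tsub := by
    rw [IntermediateField.adjoin_simple_toSubalgebra_of_isAlgebraic I_integral.isAlgebraic]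
    refine Algebra.adjoin_le ?_
    rintro w hw
    rw [Set.mem_singleton_iff] at hw
    subst hw
    exact ⟨0, 1, by push_cast; ring⟩
  exact hle hz

/-- The kernel of the natural map `ℚ*/ℚ*⁴ → ℚ(i)*/ℚ(i)*⁴` is the cyclic subgroup of
order 2 generated by the class of `-4`: a nonzero rational `x` becomes a fourth power
in `ℚ(i)` if and only if `x ∈ ℚ*⁴ ∪ (-4)·ℚ*⁴`, and `-4` is not a fourth power in `ℚ`
(so this kernel indeed has order 2). -/
theorem stmt_3 :
    (∀ x : ℚ, x ≠ 0 →
      ((∃ y : ℚ⟮Complex.I⟯, (y : ℂ) ^ 4 = (x : ℂ)) ↔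
        ∃ z : ℚ, x = z ^ 4 ∨ x = -4 * z ^ 4)) ∧
    ¬ ∃ z : ℚ, (-4 : ℚ) = z ^ 4 := by
  constructor
  · intro x hx
    constructor
    · rintro ⟨y, hy⟩
      obtain ⟨a, b, hab⟩ := mem_form y.2
      rw [hab] at hy
      -- expand (a+bI)^4
      have key : ((a ^ 4 - 6 * a ^ 2 * b ^ 2 + b ^ 4 : ℚ) : ℂ) +
          ((4 * a ^ 3 * b - 4 * a * b ^ 3 : ℚ) : ℂ) * Complex.I = (x : ℂ) := by
        rw [← hy]
        push_cast
        linear_combination (-(6 : ℂ) * a ^ 2 * b ^ 2 + b ^ 4 - b ^ 4 * Complex.I ^ 2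
          - 4 * a * b ^ 3 * Complex.I) * Complex.I_sq
      obtain ⟨hre, him⟩ := cast_split key
      have hfac : (4 : ℚ) * a * b * (a - b) * (a + b) = 0 := by linarith [him]
      rcases mul_eq_zero.1 hfac with h1 | h2
      · rcases mul_eq_zero.1 h1 with h3 | h4
        · rcases mul_eq_zero.1 h3 with h5 | h6
          · rcases mul_eq_zero.1 h5 with h7 | h8
            · norm_num at h7
            · -- a = 0
              exact ⟨b, Or.inl (by rw [← hre, h8]; ring)⟩
          · -- b = 0
            exact ⟨a, Or.inl (by rw [← hre, h6]; ring)⟩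
        · -- a = b
          have : a = b := by linarith
          exact ⟨a, Or.inr (by rw [← hre, ← this]; ring)⟩
      · -- a = -b
        have : a = -b := by linarith
        exact ⟨a, Or.inr (by rw [← hre, this]; ring)⟩
    · rintro ⟨z, hz | hz⟩
      · exact ⟨(z : ℚ⟮Complex.I⟯), by push_cast [hz]; ring⟩
      · have hI : Complex.I ∈ ℚ⟮Complex.I⟯ :=
          IntermediateField.mem_adjoin_simple_self ℚ Complex.I
        refine ⟨(z : ℚ⟮Complex.I⟯) * (1 + ⟨Complex.I, hI⟩), ?_⟩
        have h4 : ((1 : ℂ) + Complex.I) ^ 4 = -4 := by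
          linear_combination (Complex.I ^ 2 + 4 * Complex.I + 5) * Complex.I_sq
        push_cast [hz]
        rw [mul_pow, h4]
        ring
  · rintro ⟨z, hz⟩
    nlinarith [sq_nonneg (z ^ 2), sq_nonneg z]
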